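/- Let 0 < ε < 1/2 and let n ≥ 4/ε² be an integer. Let G be an edge-coloured graph on n vertices with δ₁^c(G) ≥ (1/2 + ε)n. Then for every vertex x of G there are at least ε³n⁴ ordered 4-tuples (z₁,z₂,z₃,z₄) of distinct vertices, all different from x, such that z₁z₂z₃z₄ is a properly coloured path and z₁z₂xz₃z₄ is also a properly coloured path. -/

import Mathlib

open SimpleGraph

/-- A list of vertices forms a properly coloured walk: consecutive vertices are
adjacent and consecutive edges receive different colours. -/
def IsPCWalk {V : Type*} (G : SimpleGraph V) (c : V → V → ℕ) : List V → Prop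
  | a :: b :: d :: rest => G.Adj a b ∧ c a b ≠ c b d ∧ IsPCWalk G c (b :: d :: rest)
  | [a, b] => G.Adj a b
  | _ => True

/-- A properly coloured path: distinct vertices forming a properly coloured walk. -/
def IsPCPath {V : Type*} (G : SimpleGraph V) (c : V → V → ℕ) (l : List V) : Prop :=
  l.Nodup ∧ IsPCWalk G c l

/-- A properly coloured cycle, given as a list of (distinct) vertices of length ≥ 3;
closing the cycle by appending the first two vertices ensures all adjacencies and
colour conditions, including around the wrap-around vertex. -/
def IsPCCycle {V : Type*} (G : SimpleGraph V) (c : V → V → ℕ) (l : List V) : Prop :=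
  3 ≤ l.length ∧ l.Nodup ∧ IsPCWalk G c (l ++ l.take 2)

/-- The colour degree of `v`: the number of distinct colours on edges at `v`. -/
noncomputable def colourDeg {V : Type*} (G : SimpleGraph V) (c : V → V → ℕ) (v : V) : ℕ :=
  ((c v) '' {w | G.Adj v w}).ncard

/-- `colourDeg1 G c v a`: the number of edges at `v` whose colour differs from `a`.
`δ₁^c(G) ≥ k` is then `∀ v a, k ≤ colourDeg1 G c v a`. -/
noncomputable def colourDeg1 {V : Type*} (G : SimpleGraph V) (c : V → V → ℕ) (v : V) (a : ℕ) : ℕ :=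
  {w | G.Adj v w ∧ c v w ≠ a}.ncard

private lemma sum_ge_aux {α : Type*} (s : Finset α) (f : α → ℝ) (q r : ℝ)
    (hq : q ≤ (s.card : ℝ)) (hr : 0 ≤ r) (h : ∀ a ∈ s, r ≤ f a) :
    q * r ≤ ∑ a ∈ s, f a := by
  calc q * r ≤ (s.card : ℝ) * r := mul_le_mul_of_nonneg_right hq hr
    _ ≤ ∑ a ∈ s, f a := by
        simpa [nsmul_eq_mul] using Finset.card_nsmul_le_sum s f r h

/-- If `0 < ε < 1/2`, `n ≥ 4/ε²` and `δ₁^c(G) ≥ (1/2 + ε)n`, then every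
vertex `x` has at least `ε³n⁴` absorbing paths: ordered 4-tuples `(z₁,z₂,z₃,z₄)` of distinct
vertices, all different from `x`, such that `z₁z₂z₃z₄` and `z₁z₂xz₃z₄` are both properly
coloured paths. -/
theorem stmt8 {V : Type*} [Fintype V] (G : SimpleGraph V) (c : V → V → ℕ)
    (hc : ∀ u v, c u v = c v u) (ε : ℝ) (hε0 : 0 < ε) (hε1 : ε < 1 / 2)
    (hn : 4 / ε ^ 2 ≤ (Fintype.card V : ℝ))
    (hδ : ∀ (v : V) (a : ℕ),
      (1 / 2 + ε) * (Fintype.card V : ℝ) ≤ colourDeg1 G c v a) :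
    ∀ x : V,
      ε ^ 3 * (Fintype.card V : ℝ) ^ 4 ≤
        Nat.card {p : V × V × V × V //
          p.1 ≠ x ∧ p.2.1 ≠ x ∧ p.2.2.1 ≠ x ∧ p.2.2.2 ≠ x ∧
          IsPCPath G c [p.1, p.2.1, p.2.2.1, p.2.2.2] ∧
          IsPCPath G c [p.1, p.2.1, x, p.2.2.1, p.2.2.2]} := by
  intro x
  classical
  set N : ℝ := (Fintype.card V : ℝ) with hNdef
  have hε2 : (0:ℝ) < ε ^ 2 := by positivity
  have hNpos : 0 < N := lt_of_lt_of_le (by positivity) hn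
  have hεN : 8 ≤ ε * N := by
    have h1 : 4 ≤ ε ^ 2 * N := by
      rw [div_le_iff₀ hε2] at hn; linarith [hn]
    nlinarith
  -- degree bound as finset cardinality
  have hdeg : ∀ (v : V) (a : ℕ),
      (1 / 2 + ε) * N ≤ ((Finset.univ.filter fun w => G.Adj v w ∧ c v w ≠ a).card : ℝ) := by
    intro v a
    have h := hδ v a
    have e : colourDeg1 G c v a
        = (Finset.univ.filter fun w => G.Adj v w ∧ c v w ≠ a).card := by
      rw [colourDeg1, ← Set.ncard_coe_finset]
      congr 1
      ext w
      simp
    rwa [e] at h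
  have hcardle : ∀ s : Finset V, (s.card : ℝ) ≤ N := by
    intro s
    have := (Finset.card_le_univ s).trans_eq Finset.card_univ
    rw [hNdef]
    exact_mod_cast this
  have hinter : ∀ s t : Finset V,
      (s.card : ℝ) + (t.card : ℝ) - N ≤ (((s ∩ t)).card : ℝ) := by
    intro s t
    have h := Finset.card_inter_add_card_union s t
    have h2 := hcardle (s ∪ t)
    have h3 : ((s ∩ t).card : ℝ) + ((s ∪ t).card : ℝ) = (s.card : ℝ) + (t.card : ℝ) := by
      exact_mod_cast congrArg (Nat.cast : ℕ → ℝ) h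
    linarith
  have hNb : ∀ (v : V) (a b : ℕ), 2 * (ε * N) ≤
      ((Finset.univ.filter fun w => G.Adj v w ∧ c v w ≠ a ∧ c v w ≠ b).card : ℝ) := by
    intro v a b
    have e : (Finset.univ.filter fun w => G.Adj v w ∧ c v w ≠ a ∧ c v w ≠ b)
        = (Finset.univ.filter fun w => G.Adj v w ∧ c v w ≠ a)
          ∩ (Finset.univ.filter fun w => G.Adj v w ∧ c v w ≠ b) := by
      ext w
      simp only [Finset.mem_filter, Finset.mem_inter, Finset.mem_univ, true_and]
      tauto
    rw [e]
    linarith [hinter (Finset.univ.filter fun w => G.Adj v w ∧ c v w ≠ a)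
      (Finset.univ.filter fun w => G.Adj v w ∧ c v w ≠ b), hdeg v a, hdeg v b]
  have hsd : ∀ s t : Finset V, (s.card : ℝ) - (t.card : ℝ) ≤ ((s \ t).card : ℝ) := by
    intro s t
    have := Finset.card_le_card_sdiff_add_card (s := s) (t := t)
    have h3 : (s.card : ℝ) ≤ ((s \ t).card : ℝ) + (t.card : ℝ) := by exact_mod_cast this
    linarith
  -- the four choice sets
  set A : Finset V := Finset.univ.filter (fun w => G.Adj x w) with hA_def
  set B : V → Finset V := fun z2 => Finset.univ.filter
    (fun w => (G.Adj x w ∧ c x w ≠ c x z2) ∧ (G.Adj z2 w ∧ c z2 w ≠ c z2 x)) with hB_def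
  set C : V → V → Finset V := fun z2 z3 =>
    (Finset.univ.filter fun w => G.Adj z2 w ∧ c z2 w ≠ c z2 z3 ∧ c z2 w ≠ c z2 x) \ {x, z3}
    with hC_def
  set D : V → V → V → Finset V := fun z2 z3 z1 =>
    (Finset.univ.filter fun w => G.Adj z3 w ∧ c z3 w ≠ c z3 z2 ∧ c z3 w ≠ c z3 x) \ {x, z1, z2}
    with hD_def
  have hAcard : (1 / 2 + ε) * N ≤ (A.card : ℝ) := by
    refine (hdeg x 0).trans ?_
    have hsub : (Finset.univ.filter fun w => G.Adj x w ∧ c x w ≠ 0) ⊆ A := by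
      rw [hA_def]
      intro w hw
      simp only [Finset.mem_filter, Finset.mem_univ, true_and] at hw ⊢
      exact hw.1
    exact_mod_cast Finset.card_le_card hsub
  have hBcard : ∀ z2, 2 * (ε * N) ≤ ((B z2).card : ℝ) := by
    intro z2
    have e : B z2 = (Finset.univ.filter fun w => G.Adj x w ∧ c x w ≠ c x z2)
        ∩ (Finset.univ.filter fun w => G.Adj z2 w ∧ c z2 w ≠ c z2 x) := by
      rw [hB_def]
      ext w
      simp only [Finset.mem_filter, Finset.mem_inter, Finset.mem_univ, true_and]
    rw [e]
    linarith [hinter (Finset.univ.filter fun w => G.Adj x w ∧ c x w ≠ c x z2)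
      (Finset.univ.filter fun w => G.Adj z2 w ∧ c z2 w ≠ c z2 x),
      hdeg x (c x z2), hdeg z2 (c z2 x)]
  have hpair : ∀ a b : V, (({a, b} : Finset V).card : ℝ) ≤ 2 := by
    intro a b
    have h : ({a, b} : Finset V).card ≤ 2 := by
      simpa using Finset.card_insert_le a ({b} : Finset V)
    exact_mod_cast h
  have htrip : ∀ a b d : V, (({a, b, d} : Finset V).card : ℝ) ≤ 3 := by
    intro a b d
    have h1 : ({a, b, d} : Finset V).card ≤ ({b, d} : Finset V).card + 1 :=
      Finset.card_insert_le _ _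
    have h2 : ({b, d} : Finset V).card ≤ 2 := by
      simpa using Finset.card_insert_le b ({d} : Finset V)
    have : ({a, b, d} : Finset V).card ≤ 3 := by omega
    exact_mod_cast this
  have hCcard : ∀ z2 z3, 2 * (ε * N) - 2 ≤ ((C z2 z3).card : ℝ) := by
    intro z2 z3
    rw [hC_def]
    have := hsd (Finset.univ.filter fun w => G.Adj z2 w ∧ c z2 w ≠ c z2 z3 ∧ c z2 w ≠ c z2 x)
      ({x, z3} : Finset V)
    linarith [hNb z2 (c z2 z3) (c z2 x), hpair x z3]
  have hDcard : ∀ z2 z3 z1, 2 * (ε * N) - 3 ≤ ((D z2 z3 z1).card : ℝ) := by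
    intro z2 z3 z1
    rw [hD_def]
    have := hsd (Finset.univ.filter fun w => G.Adj z3 w ∧ c z3 w ≠ c z3 z2 ∧ c z3 w ≠ c z3 x)
      ({x, z1, z2} : Finset V)
    linarith [hNb z3 (c z3 z2) (c z3 x), htrip x z1 z2]
  -- the set of tuples
  set T : Finset (V × V × V × V) := A.biUnion (fun z2 => (B z2).biUnion (fun z3 =>
      (C z2 z3).biUnion (fun z1 => (D z2 z3 z1).image (fun z4 => (z1, z2, z3, z4))))) with hT_def
  have hfst : ∀ z2 z3 z1 (p : V × V × V × V),
      p ∈ (D z2 z3 z1).image (fun z4 => (z1, z2, z3, z4)) → p.1 = z1 := by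
    intro z2 z3 z1 p hp
    simp only [Finset.mem_image] at hp
    obtain ⟨z4, _, h⟩ := hp
    subst h; rfl
  have hthd : ∀ z2 z3 (p : V × V × V × V),
      p ∈ (C z2 z3).biUnion (fun z1 => (D z2 z3 z1).image (fun z4 => (z1, z2, z3, z4))) →
        p.2.2.1 = z3 := by
    intro z2 z3 p hp
    simp only [Finset.mem_biUnion, Finset.mem_image] at hp
    obtain ⟨z1, _, z4, _, h⟩ := hp
    subst h; rfl
  have hsnd : ∀ z2 (p : V × V × V × V),
      p ∈ (B z2).biUnion (fun z3 => (C z2 z3).biUnion (fun z1 =>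
        (D z2 z3 z1).image (fun z4 => (z1, z2, z3, z4)))) → p.2.1 = z2 := by
    intro z2 p hp
    simp only [Finset.mem_biUnion, Finset.mem_image] at hp
    obtain ⟨z3, _, z1, _, z4, _, h⟩ := hp
    subst h; rfl
  have hTcardN : T.card = ∑ z2 ∈ A, ∑ z3 ∈ B z2, ∑ z1 ∈ C z2 z3, (D z2 z3 z1).card := by
    rw [hT_def, Finset.card_biUnion]
    · refine Finset.sum_congr rfl fun z2 _ => ?_
      rw [Finset.card_biUnion]
      · refine Finset.sum_congr rfl fun z3 _ => ?_
        rw [Finset.card_biUnion]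
        · refine Finset.sum_congr rfl fun z1 _ => ?_
          rw [Finset.card_image_of_injective]
          intro a b h
          simpa using h
        · intro z1 _ z1' _ hne
          rw [Function.onFun, Finset.disjoint_left]
          intro p hp hp'
          exact hne (((hfst z2 z3 z1 p hp).symm).trans (hfst z2 z3 z1' p hp'))
      · intro z3 _ z3' _ hne
        rw [Function.onFun, Finset.disjoint_left]
        intro p hp hp'
        exact hne (((hthd z2 z3 p hp).symm).trans (hthd z2 z3' p hp'))
    · intro z2 _ z2' _ hne
      rw [Function.onFun, Finset.disjoint_left]
      intro p hp hp'
      exact hne (((hsnd z2 p hp).symm).trans (hsnd z2' p hp'))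
  have hr3 : (0:ℝ) ≤ 2 * (ε * N) - 3 := by linarith
  have hr2 : (0:ℝ) ≤ (2 * (ε * N) - 2) * (2 * (ε * N) - 3) := by nlinarith
  have hr1 : (0:ℝ) ≤ 2 * (ε * N) * ((2 * (ε * N) - 2) * (2 * (ε * N) - 3)) := by nlinarith
  have hTge : (1 / 2 + ε) * N *
      (2 * (ε * N) * ((2 * (ε * N) - 2) * (2 * (ε * N) - 3))) ≤ (T.card : ℝ) := by
    have hcast : (T.card : ℝ)
        = ∑ z2 ∈ A, ∑ z3 ∈ B z2, ∑ z1 ∈ C z2 z3, ((D z2 z3 z1).card : ℝ) := by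
      rw [hTcardN]; push_cast; rfl
    rw [hcast]
    refine sum_ge_aux A _ _ _ hAcard hr1 fun z2 _ => ?_
    refine sum_ge_aux (B z2) _ _ _ (hBcard z2) hr2 fun z3 _ => ?_
    refine sum_ge_aux (C z2 z3) _ _ _ (hCcard z2 z3) hr3 fun z1 _ => hDcard z2 z3 z1
  -- T consists of absorbing paths
  have hsub : T ⊆ Finset.univ.filter (fun p : V × V × V × V =>
      p.1 ≠ x ∧ p.2.1 ≠ x ∧ p.2.2.1 ≠ x ∧ p.2.2.2 ≠ x ∧
      IsPCPath G c [p.1, p.2.1, p.2.2.1, p.2.2.2] ∧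
      IsPCPath G c [p.1, p.2.1, x, p.2.2.1, p.2.2.2]) := by
    intro p hp
    rw [hT_def] at hp
    simp only [Finset.mem_biUnion, Finset.mem_image] at hp
    obtain ⟨z2, hz2, z3, hz3, z1, hz1, z4, hz4, hpe⟩ := hp
    subst hpe
    rw [hA_def] at hz2
    rw [hB_def] at hz3
    rw [hC_def] at hz1
    rw [hD_def] at hz4
    simp only [Finset.mem_filter, Finset.mem_univ, true_and, Finset.mem_sdiff,
      Finset.mem_insert, Finset.mem_singleton, not_or] at hz2 hz3 hz1 hz4
    obtain ⟨⟨ha2, hc2⟩, ha23, hc23⟩ := hz3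
    obtain ⟨⟨ha21, hc21a, hc21b⟩, h1x, h13⟩ := hz1
    obtain ⟨⟨ha34, hc34a, hc34b⟩, h4x, h41, h42⟩ := hz4
    have h2x : z2 ≠ x := hz2.ne'
    have h3x : z3 ≠ x := ha2.ne'
    have h12 : z1 ≠ z2 := ha21.ne'
    have h23 : z2 ≠ z3 := ha23.ne
    have h34 : z3 ≠ z4 := ha34.ne
    have ha12 : G.Adj z1 z2 := ha21.symm
    have hcol1 : c z1 z2 ≠ c z2 z3 := by rw [hc z1 z2]; exact hc21a
    have hcol2 : c z2 z3 ≠ c z3 z4 := by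
      intro h; exact hc34a (by rw [← h]; exact hc z2 z3)
    have hcol3 : c z1 z2 ≠ c z2 x := by rw [hc z1 z2]; exact hc21b
    have hcol4 : c z2 x ≠ c x z3 := by
      intro h; exact hc2 (by rw [← h]; exact hc z2 x)
    have hcol5 : c x z3 ≠ c z3 z4 := by
      intro h; exact hc34b (by rw [← h]; exact hc x z3)
    have h14 : z1 ≠ z4 := fun h => h41 h.symm
    have h24 : z2 ≠ z4 := fun h => h42 h.symm
    have hx3 : x ≠ z3 := fun h => h3x h.symm
    have hx4 : x ≠ z4 := fun h => h4x h.symm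
    simp only [Finset.mem_filter, Finset.mem_univ, true_and]
    refine ⟨h1x, h2x, h3x, h4x, ⟨?_, ?_⟩, ⟨?_, ?_⟩⟩
    · simp [h12, h13, h14, h23, h24, h34]
    · exact ⟨ha12, hcol1, ha23, hcol2, ha34⟩
    · simp [h12, h13, h14, h23, h24, h34, h1x, h2x, hx3, hx4]
    · exact ⟨ha12, hcol3, hz2.symm, hcol4, ha2, hcol5, ha34⟩
  have hcount : (T.card : ℝ) ≤ (Nat.card {p : V × V × V × V //
      p.1 ≠ x ∧ p.2.1 ≠ x ∧ p.2.2.1 ≠ x ∧ p.2.2.2 ≠ x ∧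
      IsPCPath G c [p.1, p.2.1, p.2.2.1, p.2.2.2] ∧
      IsPCPath G c [p.1, p.2.1, x, p.2.2.1, p.2.2.2]} : ℝ) := by
    rw [Nat.card_eq_fintype_card, Fintype.card_subtype]
    exact_mod_cast Finset.card_le_card hsub
  have hnum : ε ^ 3 * N ^ 4 ≤ (1 / 2 + ε) * N *
      (2 * (ε * N) * ((2 * (ε * N) - 2) * (2 * (ε * N) - 3))) := by
    have hm : (8:ℝ) ≤ ε * N := hεN
    have h1 : (ε*N)^3 ≤ (ε*N) * ((2*(ε*N)-2) * (2*(ε*N)-3)) := by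
      nlinarith [mul_pos (show (0:ℝ) < ε*N by linarith) (show (0:ℝ) < 3*(ε*N)-10 by linarith)]
    have h2 : ε^3 * N^4 = (ε*N)^3 * N := by ring
    have h4 : (ε*N)^3 * N ≤ ((ε*N) * ((2*(ε*N)-2)*(2*(ε*N)-3))) * N :=
      mul_le_mul_of_nonneg_right h1 hNpos.le
    have h5 : ((ε*N) * ((2*(ε*N)-2)*(2*(ε*N)-3))) * N
        = (1/2) * N * (2*(ε*N) * ((2*(ε*N)-2)*(2*(ε*N)-3))) := by ring
    have h3 : (1/2) * N * (2*(ε*N) * ((2*(ε*N)-2)*(2*(ε*N)-3)))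
        ≤ (1/2+ε) * N * (2*(ε*N) * ((2*(ε*N)-2)*(2*(ε*N)-3))) := by
      have := mul_nonneg hNpos.le hr1
      nlinarith [this, hε0]
    linarith [h2.le, h2.ge, h4, h5.le, h5.ge, h3]
  calc ε ^ 3 * N ^ 4 ≤ _ := hnum
    _ ≤ (T.card : ℝ) := hTge
    _ ≤ _ := hcount
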